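/- arXiv:1708.08439 — 3 statements merged into one kernel-verified Lean document; each statement's English description precedes it below -/
import Mathlib

section
/- Let G be a simple graph, v a vertex of G, and x, y two distinct neighbors of v such that x and y have exactly c common neighbors other than v. Then the graph G′ obtained from G by deleting v and y and adding edges from x to every vertex in N(y) − N(x) − {x, v} satisfies |E(G′)| = |E(G)| − deg(v) − c, and G′ is a minor of G. -/
open SimpleGraph

/-- `G.HasMinor H` : `H` is isomorphic to a minor of `G`, expressed via branch sets. -/
def SimpleGraph.HasMinor {V : Type*} {W : Type*} (G : SimpleGraph V) (H : SimpleGraph W) :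
    Prop :=
  ∃ f : W → Set V,
    (∀ w, (f w).Nonempty) ∧
    (∀ w, (G.induce (f w)).Connected) ∧
    (∀ w₁ w₂, w₁ ≠ w₂ → Disjoint (f w₁) (f w₂)) ∧
    (∀ w₁ w₂, H.Adj w₁ w₂ → ∃ v₁ ∈ f w₁, ∃ v₂ ∈ f w₂, G.Adj v₁ v₂)

theorem contract_two_neighbors {V : Type*} [Fintype V] [DecidableEq V]
    (G : SimpleGraph V) [DecidableRel G.Adj]
    (v x y : V) (hvx : G.Adj v x) (hvy : G.Adj v y) (hxy : x ≠ y)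
    -- `x` and `y` are two neighbors of `v` (in the intended bipartite application they are
    -- nonadjacent, which is needed for the exact edge count):
    (hnadj : ¬ G.Adj x y)
    (c : ℕ) (hc : c = ((G.neighborSet x ∩ G.neighborSet y) \ {v}).ncard)
    (G' : SimpleGraph {u : V // u ≠ v ∧ u ≠ y})
    (hG' : G' = SimpleGraph.fromRel (fun p q =>
      G.Adj p.1 q.1 ∨
      (p.1 = x ∧ q.1 ∈ G.neighborSet y ∧ q.1 ∉ G.neighborSet x ∧ q.1 ≠ x ∧ q.1 ≠ v))) :
    (G'.edgeSet.ncard : ℤ) = (G.edgeSet.ncard : ℤ) - G.degree v - c ∧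
      G.HasMinor G' := by
  subst hG'
  have hxv : x ≠ v := hvx.ne'
  have hyv : y ≠ v := hvy.ne'
  -- the set of new neighbors of x
  set Q : Set V := {q | G.Adj y q ∧ q ∉ G.neighborSet x ∧ q ≠ x ∧ q ≠ v} with hQ
  set S₁ : Set (Sym2 V) := (fun q => s(x, q)) '' Q with hS₁
  set T : Set (Sym2 V) := G.incidenceSet v ∪ G.incidenceSet y with hT
  set S₀ : Set (Sym2 V) := G.edgeSet \ T with hS₀
  set G' := SimpleGraph.fromRel (fun p q : {u : V // u ≠ v ∧ u ≠ y} =>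
      G.Adj p.1 q.1 ∨
      (p.1 = x ∧ q.1 ∈ G.neighborSet y ∧ q.1 ∉ G.neighborSet x ∧ q.1 ≠ x ∧ q.1 ≠ v)) with hGdef
  -- image of the edge set
  have hnm : ∀ p q : {u : V // u ≠ v ∧ u ≠ y}, G.Adj p.1 q.1 →
      s(p.1, q.1) ∈ S₀ := by
    intro p q h
    refine ⟨(G.mem_edgeSet).2 h, ?_⟩
    rintro (⟨-, hm⟩ | ⟨-, hm⟩) <;> rw [Sym2.mem_iff] at hm
    · rcases hm with hm | hm
      exacts [p.2.1 hm.symm, q.2.1 hm.symm]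
    · rcases hm with hm | hm
      exacts [p.2.2 hm.symm, q.2.2 hm.symm]
  have himg : Sym2.map (Subtype.val : {u : V // u ≠ v ∧ u ≠ y} → V) '' G'.edgeSet
      = S₀ ∪ S₁ := by
    apply Set.Subset.antisymm
    · rintro e ⟨e', he', rfl⟩
      induction e' using Sym2.ind with
      | _ p q =>
        rw [SimpleGraph.mem_edgeSet, hGdef, SimpleGraph.fromRel_adj] at he'
        obtain ⟨hne, h | h⟩ := he'
        · rcases h with h | ⟨hpx, hyq, hnx, hqx, hqv⟩
          · left
            rw [Sym2.map_pair_eq]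
            exact hnm p q h
          · right
            refine ⟨q.1, ⟨hyq, hnx, hqx, hqv⟩, ?_⟩
            rw [Sym2.map_pair_eq, hpx]
        · rcases h with h | ⟨hqx, hyp, hnx, hpx, hpv⟩
          · left
            rw [Sym2.map_pair_eq]
            exact hnm p q h.symm
          · right
            refine ⟨p.1, ⟨hyp, hnx, hpx, hpv⟩, ?_⟩
            rw [Sym2.map_pair_eq, hqx, Sym2.eq_swap]
    · rintro e (⟨he, hTe⟩ | ⟨q, hq, rfl⟩)
      · induction e using Sym2.ind with
        | _ a b =>
          rw [SimpleGraph.mem_edgeSet] at he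
          have hav : a ≠ v := fun h => hTe (Or.inl ⟨(G.mem_edgeSet).2 he, by simp [h]⟩)
          have hbv : b ≠ v := fun h => hTe (Or.inl ⟨(G.mem_edgeSet).2 he, by simp [h]⟩)
          have hay : a ≠ y := fun h => hTe (Or.inr ⟨(G.mem_edgeSet).2 he, by simp [h]⟩)
          have hby : b ≠ y := fun h => hTe (Or.inr ⟨(G.mem_edgeSet).2 he, by simp [h]⟩)
          refine ⟨s(⟨a, hav, hay⟩, ⟨b, hbv, hby⟩), ?_, by rw [Sym2.map_pair_eq]⟩
          rw [SimpleGraph.mem_edgeSet, hGdef, SimpleGraph.fromRel_adj]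
          exact ⟨fun h => he.ne (congrArg Subtype.val h), Or.inl (Or.inl he)⟩
      · obtain ⟨hyq, hnx, hqx, hqv⟩ := hq
        have hqy : q ≠ y := hyq.ne'
        refine ⟨s(⟨x, hxv, hxy⟩, ⟨q, hqv, hqy⟩), ?_, by rw [Sym2.map_pair_eq]⟩
        rw [SimpleGraph.mem_edgeSet, hGdef, SimpleGraph.fromRel_adj]
        exact ⟨fun h => hqx (congrArg Subtype.val h).symm,
          Or.inl (Or.inr ⟨rfl, hyq, hnx, hqx, hqv⟩)⟩
  have hdisj : Disjoint S₀ S₁ := by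
    rw [Set.disjoint_left]
    rintro e ⟨he, -⟩ ⟨q, hq, rfl⟩
    exact hq.2.1 (G.mem_edgeSet.1 he)
  -- cardinality computations
  have h1 : G'.edgeSet.ncard = S₀.ncard + S₁.ncard := by
    rw [← Set.ncard_image_of_injective G'.edgeSet
      (Sym2.map.injective Subtype.val_injective), himg,
      Set.ncard_union_eq hdisj (Set.toFinite _) (Set.toFinite _)]
  have hTsub : T ⊆ G.edgeSet :=
    Set.union_subset (G.incidenceSet_subset v) (G.incidenceSet_subset y)
  have h2 : S₀.ncard + T.ncard = G.edgeSet.ncard :=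
    Set.ncard_diff_add_ncard_of_subset hTsub (Set.toFinite _)
  have hincv : (G.incidenceSet v).ncard = G.degree v := by
    rw [Set.ncard_eq_toFinset_card', Set.toFinset_card, G.card_incidenceSet_eq_degree]
  have hincy : (G.incidenceSet y).ncard = G.degree y := by
    rw [Set.ncard_eq_toFinset_card', Set.toFinset_card, G.card_incidenceSet_eq_degree]
  have h3 : T.ncard + 1 = G.degree v + G.degree y := by
    have := Set.ncard_union_add_ncard_inter (G.incidenceSet v) (G.incidenceSet y)
      (Set.toFinite _) (Set.toFinite _)
    rw [G.incidenceSet_inter_incidenceSet_of_adj hvy, Set.ncard_singleton, hincv, hincy] at this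
    exact this
  have hNy : (G.neighborSet y).ncard = G.degree y := by
    rw [Set.ncard_eq_toFinset_card', Set.toFinset_card, G.card_neighborSet_eq_degree]
  have hQeq : Q = (G.neighborSet y \ {v}) \ G.neighborSet x := by
    ext q
    simp only [hQ, Set.mem_setOf_eq, Set.mem_diff, Set.mem_singleton_iff,
      SimpleGraph.mem_neighborSet]
    constructor
    · rintro ⟨h1, h2, h3, h4⟩; exact ⟨⟨h1, h4⟩, h2⟩
    · rintro ⟨⟨h1, h4⟩, h2⟩
      exact ⟨h1, h2, fun h => hnadj (h ▸ h1).symm, h4⟩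
  have hCeq : (G.neighborSet y \ {v}) ∩ G.neighborSet x
      = (G.neighborSet x ∩ G.neighborSet y) \ {v} := by
    ext q
    simp only [Set.mem_inter_iff, Set.mem_diff, Set.mem_singleton_iff]
    tauto
  have h4 : S₁.ncard + (c + 1) = G.degree y := by
    have hinj : Set.InjOn (fun q => s(x, q)) Q := by
      intro a _ b _ h
      exact Sym2.congr_right.1 h
    have hs1 : S₁.ncard = Q.ncard := Set.ncard_image_of_injOn hinj
    have hsplit := Set.ncard_inter_add_ncard_diff_eq_ncard (G.neighborSet y \ {v})
      (G.neighborSet x) (Set.toFinite _)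
    rw [hCeq, ← hQeq, ← hc] at hsplit
    have hvmem : v ∈ G.neighborSet y := hvy.symm
    have hone : (G.neighborSet y \ {v}).ncard + 1 = (G.neighborSet y).ncard :=
      Set.ncard_diff_singleton_add_one hvmem (Set.toFinite _)
    rw [hs1]
    omega
  constructor
  · omega
  · -- minor via branch sets
    have hxmem : x ∈ ({x, v, y} : Set V) := by simp
    have hvmem' : v ∈ ({x, v, y} : Set V) := by simp
    have hymem : y ∈ ({x, v, y} : Set V) := by simp
    have hconn : (G.induce ({x, v, y} : Set V)).Connected := by
      rw [SimpleGraph.connected_iff]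
      refine ⟨?_, ⟨⟨x, hxmem⟩⟩⟩
      have key : ∀ a : ({x, v, y} : Set V),
          (G.induce ({x, v, y} : Set V)).Reachable a ⟨v, hvmem'⟩ := by
        rintro ⟨a, ha⟩
        simp only [Set.mem_insert_iff, Set.mem_singleton_iff] at ha
        rcases ha with rfl | rfl | rfl
        · exact SimpleGraph.Adj.reachable (by simpa using hvx.symm)
        · exact SimpleGraph.Reachable.refl _
        · exact SimpleGraph.Adj.reachable (by simpa using hvy.symm)
      intro a b
      exact (key a).trans (key b).symm
    refine ⟨fun w => if w.1 = x then {x, v, y} else {w.1}, ?_, ?_, ?_, ?_⟩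
    · intro w
      dsimp only
      split
      · exact ⟨x, hxmem⟩
      · exact ⟨w.1, rfl⟩
    · intro w
      dsimp only
      by_cases hw : w.1 = x
      · rw [if_pos hw]
        exact hconn
      · rw [if_neg hw]
        rw [SimpleGraph.connected_iff]
        refine ⟨?_, ⟨⟨w.1, rfl⟩⟩⟩
        rintro ⟨a, ha⟩ ⟨b, hb⟩
        simp only [Set.mem_singleton_iff] at ha hb
        subst ha
        subst hb
        exact SimpleGraph.Reachable.refl _
    · intro w₁ w₂ hne
      dsimp only
      by_cases h1 : w₁.1 = x <;> by_cases h2 : w₂.1 = x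
      · exact absurd (Subtype.ext (h1.trans h2.symm)) hne
      · rw [if_pos h1, if_neg h2]
        refine Set.disjoint_left.2 ?_
        intro a ha hb
        simp only [Set.mem_insert_iff, Set.mem_singleton_iff] at ha hb
        subst hb
        rcases ha with h | h | h
        exacts [h2 h, w₂.2.1 h, w₂.2.2 h]
      · rw [if_neg h1, if_pos h2]
        refine Set.disjoint_left.2 ?_
        intro a ha hb
        simp only [Set.mem_insert_iff, Set.mem_singleton_iff] at ha hb
        subst ha
        rcases hb with h | h | h
        exacts [h1 h, w₁.2.1 h, w₁.2.2 h]
      · rw [if_neg h1, if_neg h2]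
        rw [Set.disjoint_singleton_left, Set.mem_singleton_iff]
        exact fun h => hne (Subtype.ext h)
    · intro w₁ w₂ hadj
      dsimp only
      rw [hGdef, SimpleGraph.fromRel_adj] at hadj
      have hmem : ∀ w : {u : V // u ≠ v ∧ u ≠ y},
          w.1 ∈ (if w.1 = x then ({x, v, y} : Set V) else {w.1}) := by
        intro w
        by_cases hw : w.1 = x
        · rw [if_pos hw, hw]
          exact hxmem
        · rw [if_neg hw]
          rfl
      obtain ⟨hne, h | h⟩ := hadj
      · rcases h with h | ⟨hpx, hyq, hnx, hqx, hqv⟩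
        · exact ⟨w₁.1, hmem w₁, w₂.1, hmem w₂, h⟩
        · refine ⟨y, ?_, w₂.1, ?_, hyq⟩
          · rw [if_pos hpx]
            exact hymem
          · rw [if_neg hqx]
            rfl
      · rcases h with h | ⟨hqx, hyp, hnx, hpx, hpv⟩
        · exact ⟨w₁.1, hmem w₁, w₂.1, hmem w₂, h.symm⟩
        · refine ⟨w₁.1, ?_, y, ?_, hyp.symm⟩
          · rw [if_neg hpx]
            rfl
          · rw [if_pos hqx]
            exact hymem
end

section
/- Let G be a bipartite graph with bipartition (X₀, X₁) and suppose G − v is isomorphic to K_{3,n−4} with the part of size 3 contained in X₀, where v ∈ X₀ has degree 3 and there exists u ∈ X₁ not adjacent to v. Then the induced subgraph of G on X₀ ∪ {u} ∪ N(v) is isomorphic to K_{4,4} minus an edge. -/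
open SimpleGraph

/-- `K_{4,4}` minus an edge. -/
def K44minus : SimpleGraph (Fin 4 ⊕ Fin 4) :=
  (completeBipartiteGraph (Fin 4) (Fin 4)).deleteEdges {s(Sum.inl 0, Sum.inr 0)}

theorem K44minus_subgraph_from_K3nm4 {V : Type*} [Fintype V] (G : SimpleGraph V)
    [DecidableRel G.Adj] (n : ℕ) (hn : n = Fintype.card V)
    (X₀ X₁ : Set V) (hdisj : Disjoint X₀ X₁) (hunion : X₀ ∪ X₁ = Set.univ)
    (hbip : ∀ a b : V, G.Adj a b → (a ∈ X₀ ∧ b ∈ X₁) ∨ (a ∈ X₁ ∧ b ∈ X₀))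
    (v : V) (hv0 : v ∈ X₀) (hdeg : G.degree v = 3)
    (e : G.induce {w : V | w ≠ v} ≃g completeBipartiteGraph (Fin 3) (Fin (n - 4)))
    (hpart : ∀ i : Fin 3, ((e.symm (Sum.inl i)) : V) ∈ X₀)
    (u : V) (hu1 : u ∈ X₁) (huv : ¬ G.Adj v u) :
    Nonempty ((G.induce (X₀ ∪ {u} ∪ G.neighborSet v)) ≃g K44minus) := by
  classical
  have hd : ∀ x : V, x ∈ X₀ → x ∈ X₁ → False := fun x h1 h2 =>
    Set.disjoint_left.mp hdisj h1 h2
  -- the three vertices of the small part of K_{3,n-4}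
  set a : Fin 3 → V := fun i => ((e.symm (Sum.inl i)) : V) with ha
  have ha0 : ∀ i, a i ∈ X₀ := hpart
  have hav : ∀ i, a i ≠ v := fun i => (e.symm (Sum.inl i)).2
  have hainj : Function.Injective a := fun i j h => by
    have := e.symm.injective (Subtype.ext h)
    exact Sum.inl.inj this
  -- neighbors of v
  have hcard : Fintype.card (G.neighborSet v) = 3 := by
    rw [G.card_neighborSet_eq_degree, hdeg]
  set nb : (G.neighborSet v) ≃ Fin 3 := Fintype.equivFinOfCardEq hcard with hnb
  set b : Fin 3 → V := fun j => ((nb.symm j) : V) with hb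
  have hvb : ∀ j, G.Adj v (b j) := fun j => (nb.symm j).2
  have hbinj : Function.Injective b := fun i j h => by
    have := nb.symm.injective (Subtype.ext h)
    exact this
  have hbv : ∀ j, b j ≠ v := fun j h => G.irrefl (h ▸ hvb j)
  have hb1 : ∀ j, b j ∈ X₁ := by
    intro j
    rcases hbip v (b j) (hvb j) with ⟨_, h⟩ | ⟨h, _⟩
    · exact h
    · exact absurd h (fun h => hd v hv0 h)
  have hbu : ∀ j, b j ≠ u := by
    intro j h
    exact huv (h ▸ hvb j)
  have huvne : u ≠ v := fun h => hd v hv0 (h ▸ hu1)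
  -- adjacency from the complete bipartite structure
  have hainr : ∀ (i : Fin 3) (w : V) (hw : w ≠ v) (k : Fin (n - 4)),
      e ⟨w, hw⟩ = Sum.inr k → G.Adj (a i) w := by
    intro i w hw k hek
    have h2 : (G.induce {w : V | w ≠ v}).Adj (e.symm (Sum.inl i)) ⟨w, hw⟩ := by
      rw [← e.map_adj_iff, e.apply_symm_apply, hek]
      simp
    exact h2
  have haadj : ∀ (i : Fin 3) (w : V), w ≠ v → w ∈ X₁ → G.Adj (a i) w := by
    intro i w hw hw1
    rcases hek : e ⟨w, hw⟩ with k | k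
    · exfalso
      have hwa : w = a k := by
        rw [ha]
        simp only
        rw [← hek, e.symm_apply_apply]
      exact hd w (hwa ▸ ha0 k) hw1
    · exact hainr i w hw k hek
  -- every vertex of X₀ is v or one of the a i
  have hX0c : ∀ w ∈ X₀, w = v ∨ ∃ i, w = a i := by
    intro w hw0
    by_cases hwv : w = v
    · exact Or.inl hwv
    · right
      rcases hek : e ⟨w, hwv⟩ with k | k
      · exact ⟨k, by rw [ha]; simp only; rw [← hek, e.symm_apply_apply]⟩
      · exfalso
        have hadj : G.Adj (a 0) w := hainr 0 w hwv k hek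
        rcases hbip _ _ hadj with ⟨_, h2⟩ | ⟨h1, _⟩
        · exact hd w hw0 h2
        · exact hd (a 0) (ha0 0) h1
  have hbsurj : ∀ w ∈ G.neighborSet v, ∃ j, b j = w := by
    intro w hw
    exact ⟨nb ⟨w, hw⟩, by rw [hb]; simp⟩
  clear_value a nb b
  clear ha hnb hb hcard hainr
  have hau : ∀ i, G.Adj (a i) u := fun i => haadj i u huvne hu1
  have hab : ∀ i j, G.Adj (a i) (b j) := fun i j => haadj i (b j) (hbv j) (hb1 j)
  have hnoadj0 : ∀ x y : V, x ∈ X₀ → y ∈ X₀ → ¬ G.Adj x y := by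
    intro x y hx hy h
    rcases hbip _ _ h with ⟨_, h2⟩ | ⟨h1, _⟩
    · exact hd y hy h2
    · exact hd x hx h1
  have hnoadj1 : ∀ x y : V, x ∈ X₁ → y ∈ X₁ → ¬ G.Adj x y := by
    intro x y hx hy h
    rcases hbip _ _ h with ⟨h1, _⟩ | ⟨_, h2⟩
    · exact hd x h1 hx
    · exact hd y h2 hy
  -- the map
  set F : Fin 4 ⊕ Fin 4 → V :=
    Sum.elim ![v, a 0, a 1, a 2] ![u, b 0, b 1, b 2] with hF
  have hF0 : ∀ i : Fin 4, F (Sum.inl i) ∈ X₀ := by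
    intro i
    fin_cases i <;> simp [hF] <;> first | exact hv0 | exact ha0 _
  have hF1 : ∀ j : Fin 4, F (Sum.inr j) ∈ X₁ := by
    intro j
    fin_cases j <;> simp [hF] <;> first | exact hu1 | exact hb1 _
  have hFmem : ∀ x, F x ∈ X₀ ∪ {u} ∪ G.neighborSet v := by
    rintro (i | j)
    · exact Or.inl (Or.inl (hF0 i))
    · fin_cases j
      · exact Or.inl (Or.inr rfl)
      · exact Or.inr (hvb 0)
      · exact Or.inr (hvb 1)
      · exact Or.inr (hvb 2)
  have hFinj : Function.Injective F := by
    rintro (i | i) (j | j) h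
    · congr 1
      fin_cases i <;> fin_cases j <;> simp [hF] at h ⊢ <;>
        first
          | rfl
          | exact absurd h (hav _)
          | exact absurd h.symm (hav _)
          | exact absurd (hainj h) (by decide)
          | exact absurd (hainj h.symm) (by decide)
    · exact absurd (hF1 j) (fun hx => hd _ (h ▸ hF0 i) hx)
    · exact absurd (hF1 i) (fun hx => hd _ (h.symm ▸ hF0 j) hx)
    · congr 1
      fin_cases i <;> fin_cases j <;> simp [hF] at h ⊢ <;>
        first
          | rfl
          | exact absurd h (hbu _).symm
          | exact absurd h.symm (hbu _).symm
          | exact absurd h (hbu _)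
          | exact absurd h.symm (hbu _)
          | exact absurd (hbinj h) (by decide)
          | exact absurd (hbinj h.symm) (by decide)
  have hFsurj : ∀ w ∈ X₀ ∪ {u} ∪ G.neighborSet v, ∃ x, F x = w := by
    rintro w ((hw | hw) | hw)
    · rcases hX0c w hw with rfl | ⟨i, rfl⟩
      · exact ⟨Sum.inl 0, by simp [hF]⟩
      · fin_cases i
        · exact ⟨Sum.inl 1, by simp [hF]⟩
        · exact ⟨Sum.inl 2, by simp [hF]⟩
        · exact ⟨Sum.inl 3, by simp [hF]⟩
    · exact ⟨Sum.inr 0, by simp [hF]; exact hw.symm⟩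
    · obtain ⟨j, hj⟩ := hbsurj w hw
      fin_cases j
      · exact ⟨Sum.inr 1, by simpa [hF] using hj⟩
      · exact ⟨Sum.inr 2, by simpa [hF] using hj⟩
      · exact ⟨Sum.inr 3, by simpa [hF] using hj⟩
  -- adjacency in K44minus
  have hK : ∀ (i j : Fin 4), K44minus.Adj (Sum.inl i) (Sum.inr j) ↔ ¬(i = 0 ∧ j = 0) := by
    intro i j
    simp [K44minus, SimpleGraph.deleteEdges_adj, Sym2.eq_iff]
  have hKll : ∀ i j : Fin 4, ¬ K44minus.Adj (Sum.inl i) (Sum.inl j) := by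
    intro i j h
    simp [K44minus, SimpleGraph.deleteEdges_adj] at h
  have hKrr : ∀ i j : Fin 4, ¬ K44minus.Adj (Sum.inr i) (Sum.inr j) := by
    intro i j h
    simp [K44minus, SimpleGraph.deleteEdges_adj] at h
  have key01 : ∀ i j : Fin 4,
      G.Adj (F (Sum.inl i)) (F (Sum.inr j)) ↔ K44minus.Adj (Sum.inl i) (Sum.inr j) := by
    intro i j
    rw [hK]
    constructor
    · rintro hadj ⟨rfl, rfl⟩
      simp [hF] at hadj
      exact huv hadj
    · intro hne
      fin_cases i <;> fin_cases j <;> simp [hF] <;>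
        first
          | exact hvb _
          | exact hau _
          | exact hab _ _
          | simp at hne
  have key : ∀ x y, G.Adj (F x) (F y) ↔ K44minus.Adj x y := by
    rintro (i | i) (j | j)
    · exact iff_of_false (hnoadj0 _ _ (hF0 i) (hF0 j)) (hKll i j)
    · exact key01 i j
    · rw [G.adj_comm, K44minus.adj_comm]
      exact key01 j i
    · exact iff_of_false (hnoadj1 _ _ (hF1 i) (hF1 j)) (hKrr i j)
  -- the isomorphism
  have hinj : Function.Injective
      (fun x => (⟨F x, hFmem x⟩ : (X₀ ∪ {u} ∪ G.neighborSet v : Set V))) :=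
    fun x y h => hFinj (congrArg Subtype.val h)
  have hsurj : Function.Surjective
      (fun x => (⟨F x, hFmem x⟩ : (X₀ ∪ {u} ∪ G.neighborSet v : Set V))) := by
    rintro ⟨w, hw⟩
    obtain ⟨x, hx⟩ := hFsurj w hw
    exact ⟨x, Subtype.ext hx⟩
  refine ⟨(SimpleGraph.Iso.symm ⟨Equiv.ofBijective _ ⟨hinj, hsurj⟩, ?_⟩)⟩
  intro x y
  exact key x y
end

section
/- Every graph on n ≥ 4 vertices with no minor isomorphic to K_5 has at most 3n − 6 edges. -/
open SimpleGraph

section Basic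
variable {V V' W : Type*}

/-- pushing connectivity of induced subgraph along an adjacency-preserving map -/
lemma induce_connected_map (G' : SimpleGraph V') (G : SimpleGraph V) (φ : V' → V)
    (s : Set V') (hadj : ∀ a b, a ∈ s → b ∈ s → G'.Adj a b → G.Adj (φ a) (φ b))
    (h : (G'.induce s).Connected) : (G.induce (φ '' s)).Connected := by
  let f : G'.induce s →g G.induce (φ '' s) :=
    ⟨fun a => ⟨φ a.1, a.1, a.2, rfl⟩, fun {a b} hab => hadj _ _ a.2 b.2 hab⟩
  refine h.map f ?_
  rintro ⟨v, a, ha, rfl⟩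
  exact ⟨⟨a, ha⟩, Subtype.ext rfl⟩

/-- transfer a minor along an injective adjacency-preserving map -/
lemma hasMinor_map (G' : SimpleGraph V') (G : SimpleGraph V) (H : SimpleGraph W)
    (φ : V' → V) (hinj : Function.Injective φ)
    (hadj : ∀ a b, G'.Adj a b → G.Adj (φ a) (φ b))
    (h : G'.HasMinor H) : G.HasMinor H := by
  obtain ⟨f, hne, hconn, hdisj, he⟩ := h
  refine ⟨fun w => φ '' f w, fun w => (hne w).image φ,
    fun w => induce_connected_map G' G φ _ (fun a b _ _ h => hadj a b h) (hconn w), ?_, ?_⟩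
  · intro w₁ w₂ hw
    exact (Set.disjoint_image_iff hinj).2 (hdisj _ _ hw)
  · intro w₁ w₂ hw
    obtain ⟨a, ha, b, hb, hab⟩ := he _ _ hw
    exact ⟨φ a, ⟨a, ha, rfl⟩, φ b, ⟨b, hb, rfl⟩, hadj _ _ hab⟩

lemma hasMinor_mono {G₁ G₂ : SimpleGraph V} (H : SimpleGraph W) (hle : G₁ ≤ G₂)
    (h : G₁.HasMinor H) : G₂.HasMinor H :=
  hasMinor_map G₁ G₂ H id Function.injective_id (fun _ _ hab => hle hab) h

/-- adding a pendant vertex to a connected induced set -/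
lemma induce_connected_insert (G : SimpleGraph V) (s : Set V) (a b : V) (ha : a ∈ s)
    (hab : G.Adj a b) (h : (G.induce s).Connected) : (G.induce (insert b s)).Connected := by
  rw [connected_iff_exists_forall_reachable]
  refine ⟨⟨a, Set.mem_insert_of_mem _ ha⟩, ?_⟩
  rintro ⟨w, hw⟩
  rcases hw with hw | hw
  · subst hw
    exact Reachable.symm (Adj.reachable (by simpa [comap_adj] using hab.symm))
  · let f : G.induce s →g G.induce (insert b s) :=
      ⟨fun x => ⟨x.1, Set.mem_insert_of_mem _ x.2⟩, fun hxy => hxy⟩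
    exact (h.preconnected ⟨a, ha⟩ ⟨w, hw⟩).map f

end Basic
section Part2
variable {V : Type*}

lemma induce_singleton_connected (G : SimpleGraph V) (x : V) :
    (G.induce ({x} : Set V)).Connected := by
  rw [connected_iff_exists_forall_reachable]
  refine ⟨⟨x, rfl⟩, fun w => ?_⟩
  have : w = ⟨x, rfl⟩ := Subtype.ext w.2
  rw [this]

lemma clique_hasMinor (G : SimpleGraph V) (k : ℕ) (a : Fin k → V)
    (hinj : Function.Injective a) (hadj : ∀ i j, i ≠ j → G.Adj (a i) (a j)) :
    G.HasMinor (completeGraph (Fin k)) := by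
  refine ⟨fun i => {a i}, fun i => ⟨a i, rfl⟩, fun i => induce_singleton_connected G (a i),
    ?_, ?_⟩
  · intro i j hij
    simp only [Set.disjoint_singleton]
    exact fun h => hij (hinj h)
  · intro i j hij
    exact ⟨a i, rfl, a j, rfl, hadj i j hij⟩

lemma neighborSet_clique_lift (G : SimpleGraph V) (v : V) (k : ℕ)
    (h : (G.induce (G.neighborSet v)).HasMinor (completeGraph (Fin k))) :
    G.HasMinor (completeGraph (Fin (k + 1))) := by
  obtain ⟨f, hne, hconn, hdisj, hadj⟩ := h
  have hvim : ∀ (jj : Fin k), v ∉ Subtype.val '' f jj := by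
    rintro jj ⟨b, _, hbv⟩
    exact G.irrefl (hbv ▸ (b.2 : G.Adj v b.1))
  have hcast : ∀ (i j : Fin (k+1)) (h1 : (i:ℕ) < k) (h2 : (j:ℕ) < k), i ≠ j →
      (⟨(i:ℕ), h1⟩ : Fin k) ≠ ⟨(j:ℕ), h2⟩ := by
    intro i j h1 h2 hij hh
    exact hij (by ext; simpa using congrArg (fun (x : Fin k) => (x : ℕ)) hh)
  refine ⟨fun i => if h : (i : ℕ) < k then Subtype.val '' f ⟨i, h⟩ else {v}, ?_, ?_, ?_, ?_⟩
  · intro i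
    dsimp only
    by_cases h : (i : ℕ) < k
    · rw [dif_pos h]; exact (hne ⟨i, h⟩).image _
    · rw [dif_neg h]; exact ⟨v, rfl⟩
  · intro i
    dsimp only
    by_cases h : (i : ℕ) < k
    · rw [dif_pos h]
      exact induce_connected_map _ G Subtype.val _ (fun a b _ _ hab => hab) (hconn ⟨i, h⟩)
    · rw [dif_neg h]
      exact induce_singleton_connected G v
  · intro i j hij
    dsimp only
    by_cases h1 : (i : ℕ) < k <;> by_cases h2 : (j : ℕ) < k
    · rw [dif_pos h1, dif_pos h2]
      exact (Set.disjoint_image_iff Subtype.val_injective).2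
        (hdisj _ _ (hcast i j h1 h2 hij))
    · rw [dif_pos h1, dif_neg h2, Set.disjoint_singleton_right]
      exact hvim _
    · rw [dif_neg h1, dif_pos h2, Set.disjoint_singleton_left]
      exact hvim _
    · exact absurd (by ext; omega : i = j) hij
  · intro i j hij
    have hij' : i ≠ j := hij.ne
    have key : ∀ (jj : Fin k), ∃ b ∈ Subtype.val '' f jj, G.Adj v b := by
      intro jj
      obtain ⟨b, hb⟩ := hne jj
      exact ⟨b.1, ⟨b, hb, rfl⟩, b.2⟩
    dsimp only
    by_cases h1 : (i : ℕ) < k <;> by_cases h2 : (j : ℕ) < k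
    · rw [dif_pos h1, dif_pos h2]
      obtain ⟨b1, hb1, b2, hb2, hb⟩ := hadj _ _ (hcast i j h1 h2 hij')
      exact ⟨b1.1, ⟨b1, hb1, rfl⟩, b2.1, ⟨b2, hb2, rfl⟩, hb⟩
    · rw [dif_pos h1, dif_neg h2]
      obtain ⟨b, hb, hvb⟩ := key ⟨(i : ℕ), h1⟩
      exact ⟨b, hb, v, rfl, hvb.symm⟩
    · rw [dif_neg h1, dif_pos h2]
      obtain ⟨b, hb, hvb⟩ := key ⟨(j : ℕ), h2⟩
      exact ⟨v, rfl, b, hb, hvb⟩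
    · exact absurd (by ext; omega : i = j) hij'

end Part2
section Part3
open Finset
variable {V : Type*} [Fintype V] [DecidableEq V]

omit [DecidableEq V] in
lemma ncard_eq_edgeFinset_card (G : SimpleGraph V) [Fintype G.edgeSet] :
    G.edgeSet.ncard = G.edgeFinset.card := Set.ncard_eq_toFinset_card' _

lemma exists_trim (G : SimpleGraph V) [DecidableRel G.Adj] (k : ℕ)
    (hk : k ≤ G.edgeFinset.card) :
    ∃ (G' : SimpleGraph V), G' ≤ G ∧ G'.edgeSet.ncard = k := by
  obtain ⟨s, hs, hcard⟩ := Finset.exists_subset_card_eq hk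
  have hsub : (↑s : Set (Sym2 V)) ⊆ G.edgeSet := by
    intro e he
    exact SimpleGraph.mem_edgeFinset.1 (hs he)
  refine ⟨fromEdgeSet ↑s, ?_, ?_⟩
  · calc fromEdgeSet (↑s : Set (Sym2 V)) ≤ fromEdgeSet G.edgeSet := fromEdgeSet_mono hsub
      _ = G := G.fromEdgeSet_edgeSet
  · have h1 : (fromEdgeSet (↑s : Set (Sym2 V))).edgeSet = ↑s := by
      rw [SimpleGraph.edgeSet_fromEdgeSet]
      ext e
      simp only [Set.mem_diff, Set.mem_setOf_eq, Finset.mem_coe, and_iff_left_iff_imp]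
      intro hm hd
      exact G.not_isDiag_of_mem_edgeSet (hsub hm) hd
    rw [h1, Set.ncard_coe_finset, hcard]

omit [DecidableEq V] in
lemma exists_small_degree (G : SimpleGraph V) [DecidableRel G.Adj] (k : ℕ)
    (he : 2 * G.edgeFinset.card < k * Fintype.card V) : ∃ v, G.degree v < k := by
  by_contra h
  push_neg at h
  have h2 := Finset.card_nsmul_le_sum Finset.univ (fun v => G.degree v) k (fun v _ => h v)
  rw [SimpleGraph.sum_degrees_eq_twice_card_edges] at h2
  simp only [Finset.card_univ, smul_eq_mul] at h2
  rw [mul_comm] at h2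
  omega

omit [DecidableEq V] in
lemma card_edge_ge_of_min_degree (G : SimpleGraph V) [DecidableRel G.Adj] (k : ℕ)
    (h : ∀ w, k ≤ G.degree w) : k * Fintype.card V ≤ 2 * G.edgeFinset.card := by
  have h2 := Finset.card_nsmul_le_sum Finset.univ (fun v => G.degree v) k (fun v _ => h v)
  rw [SimpleGraph.sum_degrees_eq_twice_card_edges] at h2
  simp only [Finset.card_univ, smul_eq_mul] at h2
  rw [mul_comm] at h2
  omega

lemma card_compl_singleton (v : V) : Fintype.card {u : V // u ≠ v} = Fintype.card V - 1 := by
  simp [Fintype.card_subtype_compl]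

lemma complete_of_degree_ge (H : SimpleGraph V) [DecidableRel H.Adj]
    (h : ∀ w, Fintype.card V - 1 ≤ H.degree w) (u w : V) (huw : u ≠ w) : H.Adj u w := by
  by_contra hadj
  have hsub : H.neighborFinset u ⊆ (Finset.univ.erase w).erase u := by
    intro c hc
    rw [SimpleGraph.mem_neighborFinset] at hc
    refine Finset.mem_erase.2 ⟨fun hcu => H.irrefl (hcu ▸ hc), Finset.mem_erase.2
      ⟨fun hcw => hadj (hcw ▸ hc), Finset.mem_univ c⟩⟩
  have hcard := Finset.card_le_card hsub
  rw [SimpleGraph.card_neighborFinset_eq_degree] at hcard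
  have h1 : u ∈ Finset.univ.erase w := Finset.mem_erase.2 ⟨huw, Finset.mem_univ u⟩
  rw [Finset.card_erase_of_mem h1, Finset.card_erase_of_mem (Finset.mem_univ w),
    Finset.card_univ] at hcard
  have h4 := h u
  have h5 : 2 ≤ Fintype.card V := by
    have := Fintype.card_le_of_injective (fun b : Bool => if b then u else w)
      (by intro a b hab; cases a <;> cases b <;> simp_all)
    simpa using this
  omega

lemma del_edge_bound (G : SimpleGraph V) [DecidableRel G.Adj] (v : V)
    [DecidableRel (G.comap (Subtype.val : {u : V // u ≠ v} → V)).Adj] :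
    G.edgeFinset.card ≤ (G.comap (Subtype.val : {u : V // u ≠ v} → V)).edgeFinset.card
      + G.degree v := by
  have hsub : G.edgeFinset ⊆
      ((G.comap (Subtype.val : {u : V // u ≠ v} → V)).edgeFinset.map ⟨Sym2.map Subtype.val, Sym2.map.injective Subtype.val_injective⟩)
      ∪ G.incidenceFinset v := by
    intro e he
    induction e using Sym2.ind with
    | _ a b =>
      rw [SimpleGraph.mem_edgeFinset, SimpleGraph.mem_edgeSet] at he
      by_cases hv : a = v ∨ b = v
      · refine Finset.mem_union_right _ ?_
        rw [SimpleGraph.mem_incidenceFinset]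
        exact ⟨he, by rcases hv with h | h <;> simp [h]⟩
      · push_neg at hv
        refine Finset.mem_union_left _ ?_
        rw [Finset.mem_map]
        refine ⟨s(⟨a, hv.1⟩, ⟨b, hv.2⟩), ?_, by simp [Sym2.map_pair_eq]⟩
        rw [SimpleGraph.mem_edgeFinset, SimpleGraph.mem_edgeSet]
        exact he
  calc G.edgeFinset.card ≤ _ := Finset.card_le_card hsub
    _ ≤ ((G.comap (Subtype.val : {u : V // u ≠ v} → V)).edgeFinset.map ⟨Sym2.map Subtype.val, Sym2.map.injective Subtype.val_injective⟩).card
        + (G.incidenceFinset v).card := Finset.card_union_le _ _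
    _ = (G.comap (Subtype.val : {u : V // u ≠ v} → V)).edgeFinset.card + G.degree v := by
        rw [Finset.card_map, SimpleGraph.card_incidenceFinset_eq_degree]

lemma common_le_induced_degree (G : SimpleGraph V) [DecidableRel G.Adj] (v u : V)
    (hu : G.Adj v u) [DecidableRel (G.induce (G.neighborSet v)).Adj] :
    (G.neighborFinset u ∩ G.neighborFinset v).card
      ≤ (G.induce (G.neighborSet v)).degree ⟨u, hu⟩ := by
  rw [← SimpleGraph.card_neighborFinset_eq_degree]
  refine Finset.card_le_card_of_injOn
    (fun c => if h : c ∈ G.neighborSet v then (⟨c, h⟩ : G.neighborSet v) else ⟨u, hu⟩) ?_ ?_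
  · intro c hc
    rw [Finset.mem_coe, Finset.mem_inter, SimpleGraph.mem_neighborFinset, SimpleGraph.mem_neighborFinset] at hc
    have hcv : c ∈ G.neighborSet v := hc.2
    dsimp only
    rw [dif_pos hcv, Finset.mem_coe, SimpleGraph.mem_neighborFinset]
    exact hc.1
  · intro c hc d hd hcd
    simp only [Finset.coe_inter, Set.mem_inter_iff, Finset.mem_coe,
      SimpleGraph.mem_neighborFinset] at hc hd
    have hcv : c ∈ G.neighborSet v := hc.2
    have hdv : d ∈ G.neighborSet v := hd.2
    dsimp only at hcd
    rw [dif_pos hcv, dif_pos hdv] at hcd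
    exact congrArg Subtype.val hcd

end Part3
section Part4
open Finset
variable {V : Type*}

/-- contraction of the edge `xy` (identifying `y` into `x`) -/
def contractE (G : SimpleGraph V) (x y : V) : SimpleGraph {u : V // u ≠ y} where
  Adj a b := a ≠ b ∧ (G.Adj a b ∨ ((a : V) = x ∧ G.Adj y b) ∨ ((b : V) = x ∧ G.Adj y a))
  symm := by
    constructor
    rintro a b ⟨hne, h⟩
    refine ⟨hne.symm, ?_⟩
    rcases h with h | ⟨h1, h2⟩ | ⟨h1, h2⟩
    · exact Or.inl h.symm
    · exact Or.inr (Or.inr ⟨h1, h2⟩)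
    · exact Or.inr (Or.inl ⟨h1, h2⟩)
  loopless := ⟨fun a => by simp⟩

lemma contractE_branch_connected (G : SimpleGraph V) (x y : V) (hxy : G.Adj x y)
    (s : Set {u : V // u ≠ y}) (hx : (⟨x, G.ne_of_adj hxy⟩ : {u : V // u ≠ y}) ∈ s)
    (hconn : ((contractE G x y).induce s).Connected) :
    (G.induce (Subtype.val '' s ∪ {y})).Connected := by
  set t : Set V := Subtype.val '' s ∪ {y} with ht
  have hyt : y ∈ t := Or.inr rfl
  have hmem : ∀ (a : ↥s), ((a : {u : V // u ≠ y}) : V) ∈ t := fun a => Or.inl ⟨a.1, a.2, rfl⟩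
  have key : ∀ (a b : ↥s), ((contractE G x y).induce s).Walk a b →
      (G.induce t).Reachable ⟨(a : {u : V // u ≠ y}), hmem a⟩ ⟨(b : {u : V // u ≠ y}), hmem b⟩ := by
    intro a b w
    induction w with
    | nil => exact Reachable.refl _
    | @cons u v' w' h p ih =>
      refine Reachable.trans ?_ ih
      obtain ⟨hne, hcase⟩ := (h : (contractE G x y).Adj u.1 v'.1)
      rcases hcase with hG | ⟨h1, h2⟩ | ⟨h1, h2⟩
      · exact Adj.reachable (show G.Adj (u : {u : V // u ≠ y}) (v' : {u : V // u ≠ y}) from hG)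
      · have h1' : (((u : ↥s) : {u : V // u ≠ y}) : V) = x := h1
        have r1 : (G.induce t).Adj ⟨(u : {u : V // u ≠ y}), hmem u⟩ ⟨y, hyt⟩ := by
          change G.Adj (((u : ↥s) : {u : V // u ≠ y}) : V) y
          rw [h1']
          exact hxy
        have r2 : (G.induce t).Adj ⟨y, hyt⟩ ⟨(v' : {u : V // u ≠ y}), hmem v'⟩ := h2
        exact r1.reachable.trans r2.reachable
      · have h1' : (((v' : ↥s) : {u : V // u ≠ y}) : V) = x := h1
        have r1 : (G.induce t).Adj ⟨(u : {u : V // u ≠ y}), hmem u⟩ ⟨y, hyt⟩ := h2.symm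
        have r2 : (G.induce t).Adj ⟨y, hyt⟩ ⟨(v' : {u : V // u ≠ y}), hmem v'⟩ := by
          change G.Adj y (((v' : ↥s) : {u : V // u ≠ y}) : V)
          rw [h1']
          exact hxy.symm
        exact r1.reachable.trans r2.reachable
  rw [connected_iff_exists_forall_reachable]
  have hxt : x ∈ t := Or.inl ⟨⟨x, G.ne_of_adj hxy⟩, hx, rfl⟩
  refine ⟨⟨x, hxt⟩, ?_⟩
  rintro ⟨c, hc⟩
  rcases hc with ⟨a, ha, rfl⟩ | hc
  · obtain ⟨w⟩ := hconn.preconnected ⟨⟨x, G.ne_of_adj hxy⟩, hx⟩ ⟨a, ha⟩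
    exact key _ _ w
  · have hc' : c = y := hc
    subst hc'
    exact Adj.reachable (show G.Adj x c from hxy)

lemma contractE_hasMinor (G : SimpleGraph V) (x y : V) (hxy : G.Adj x y) {W : Type*}
    (H : SimpleGraph W) (h : (contractE G x y).HasMinor H) : G.HasMinor H := by
  classical
  obtain ⟨f, hne, hconn, hdisj, hadj⟩ := h
  have hxy' : x ≠ y := G.ne_of_adj hxy
  set xh : {u : V // u ≠ y} := ⟨x, hxy'⟩ with hxh
  refine ⟨fun w => Subtype.val '' f w ∪ (if xh ∈ f w then {y} else ∅), ?_, ?_, ?_, ?_⟩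
  · intro w
    obtain ⟨b, hb⟩ := hne w
    exact ⟨b.1, Set.mem_union_left _ ⟨b, hb, rfl⟩⟩

  · intro w
    dsimp only
    by_cases hx : xh ∈ f w
    · rw [if_pos hx]
      exact contractE_branch_connected G x y hxy (f w) hx (hconn w)
    · rw [if_neg hx]
      have : Subtype.val '' f w ∪ (∅ : Set V) = Subtype.val '' f w := Set.union_empty _
      rw [this]
      refine induce_connected_map (contractE G x y) G Subtype.val (f w) ?_ (hconn w)
      intro a b ha hb hab
      rcases hab.2 with hG | ⟨h1, h2⟩ | ⟨h1, h2⟩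
      · exact hG
      · exact absurd ha (by rw [show a = xh from Subtype.ext h1]; exact hx)
      · exact absurd hb (by rw [show b = xh from Subtype.ext h1]; exact hx)
  · intro w₁ w₂ hw
    have hdd := hdisj w₁ w₂ hw
    dsimp only
    rw [Set.disjoint_left]
    rintro c hc1 hc2
    rcases hc1 with ⟨a, ha, rfl⟩ | hc1
    · rcases hc2 with ⟨b, hb, hba⟩ | hc2
      · have hb' : a ∈ f w₂ := by rw [← show b = a from Subtype.ext hba]; exact hb
        exact Set.disjoint_left.1 hdd ha hb'
      · by_cases hx2 : xh ∈ f w₂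
        · rw [if_pos hx2] at hc2
          exact a.2 hc2
        · rw [if_neg hx2] at hc2
          exact hc2
    · by_cases hx1 : xh ∈ f w₁
      · rw [if_pos hx1] at hc1
        have hcy : c = y := hc1
        subst hcy
        rcases hc2 with ⟨b, hb, hbc⟩ | hc2
        · exact b.2 hbc
        · by_cases hx2 : xh ∈ f w₂
          · exact Set.disjoint_left.1 hdd hx1 hx2
          · rw [if_neg hx2] at hc2
            exact hc2
      · rw [if_neg hx1] at hc1
        exact hc1
  · intro w₁ w₂ hw
    obtain ⟨a, ha, b, hb, hab⟩ := hadj w₁ w₂ hw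
    dsimp only
    rcases hab.2 with hG | ⟨h1, h2⟩ | ⟨h1, h2⟩
    · exact ⟨a.1, Set.mem_union_left _ ⟨a, ha, rfl⟩, b.1, Set.mem_union_left _ ⟨b, hb, rfl⟩, hG⟩
    · have hax : a = xh := Subtype.ext h1
      refine ⟨y, ?_, b.1, Set.mem_union_left _ ⟨b, hb, rfl⟩, h2⟩
      rw [hax] at ha
      rw [if_pos ha]
      exact Set.mem_union_right _ rfl
    · have hbx : b = xh := Subtype.ext h1
      refine ⟨a.1, Set.mem_union_left _ ⟨a, ha, rfl⟩, y, ?_, h2.symm⟩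
      rw [hbx] at hb
      rw [if_pos hb]
      exact Set.mem_union_right _ rfl

lemma edge_rep (G : SimpleGraph V) (y : V) (e : Sym2 V) (he : e ∈ G.edgeSet) :
    ∃ a b : V, e = s(a, b) ∧ G.Adj a b ∧ b ≠ y := by
  induction e using Sym2.ind with
  | _ a b =>
    rw [SimpleGraph.mem_edgeSet] at he
    by_cases hb : b = y
    · refine ⟨b, a, Sym2.eq_swap, he.symm, ?_⟩
      intro ha
      exact G.ne_of_adj he (by rw [ha, hb])
    · exact ⟨a, b, rfl, he, hb⟩

lemma contract_edge_bound [Fintype V] [DecidableEq V] (G : SimpleGraph V)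
    [DecidableRel G.Adj] (x y : V) (hxy : G.Adj x y)
    [DecidableRel (contractE G x y).Adj] :
    G.edgeFinset.card ≤ (contractE G x y).edgeFinset.card
      + (G.neighborFinset x ∩ G.neighborFinset y).card + 1 := by
  have hxy' : x ≠ y := G.ne_of_adj hxy
  set g : V → {u : V // u ≠ y} := fun u => if h : u = y then ⟨x, hxy'⟩ else ⟨u, h⟩ with hg
  set B : Finset (Sym2 V) :=
    insert s(x, y) ((G.neighborFinset x ∩ G.neighborFinset y).image (fun c => s(y, c))) with hB
  have hgy : g y = ⟨x, hxy'⟩ := dif_pos rfl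
  have hgne : ∀ (u : V) (hu : u ≠ y), g u = ⟨u, hu⟩ := fun u hu => dif_neg hu
  -- key facts for edges in G.edgeFinset \ B containing y
  have hyfacts : ∀ b : V, G.Adj y b → s(y, b) ∉ B → b ≠ x ∧ ¬ G.Adj x b := by
    intro b hadj hnB
    constructor
    · intro hbx
      exact hnB (by rw [hbx, Sym2.eq_swap]; exact Finset.mem_insert_self _ _)
    · intro hax
      refine hnB (Finset.mem_insert_of_mem ?_)
      exact Finset.mem_image.2 ⟨b, Finset.mem_inter.2 ⟨(SimpleGraph.mem_neighborFinset _ _ _).2 hax,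
        (SimpleGraph.mem_neighborFinset _ _ _).2 hadj⟩, rfl⟩
  have hmain : (G.edgeFinset \ B).card ≤ (contractE G x y).edgeFinset.card := by
    refine Finset.card_le_card_of_injOn (Sym2.map g) ?_ ?_
    · intro e he
      rw [Finset.mem_coe, Finset.mem_sdiff] at he
      obtain ⟨a, b, rfl, hadj, hby⟩ := edge_rep G y e (SimpleGraph.mem_edgeFinset.1 he.1)
      rw [Sym2.map_pair_eq, Finset.mem_coe, SimpleGraph.mem_edgeFinset, SimpleGraph.mem_edgeSet]
      by_cases ha : a = y
      · subst ha
        obtain ⟨hbx, hnadj⟩ := hyfacts b hadj he.2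
        rw [hgy, hgne b hby]
        exact ⟨fun h => hbx (Subtype.mk_eq_mk.1 h).symm, Or.inr (Or.inl ⟨rfl, hadj⟩)⟩
      · rw [hgne a ha, hgne b hby]
        exact ⟨fun h => G.ne_of_adj hadj (Subtype.mk_eq_mk.1 h), Or.inl hadj⟩
    · intro e1 he1 e2 he2 heq
      rw [Finset.coe_sdiff, Set.mem_diff] at he1 he2
      obtain ⟨a, b, rfl, hab, hby⟩ := edge_rep G y e1 (SimpleGraph.mem_edgeFinset.1 he1.1)
      obtain ⟨c, d, rfl, hcd, hdy⟩ := edge_rep G y e2 (SimpleGraph.mem_edgeFinset.1 he2.1)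
      rw [Sym2.map_pair_eq, Sym2.map_pair_eq, Sym2.eq_iff] at heq
      by_cases ha : a = y <;> by_cases hc : c = y
      · subst ha; subst hc
        obtain ⟨hbx, _⟩ := hyfacts b hab he1.2
        rw [hgy, hgne b hby, hgne d hdy] at heq
        rcases heq with ⟨_, h2⟩ | ⟨h1, h2⟩
        · rw [Subtype.mk_eq_mk.1 h2]
        · exact absurd (Subtype.mk_eq_mk.1 h2) hbx
      · subst ha
        obtain ⟨hbx, hnadj⟩ := hyfacts b hab he1.2
        rw [hgy, hgne b hby, hgne c hc, hgne d hdy] at heq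
        exfalso
        rcases heq with ⟨h1, h2⟩ | ⟨h1, h2⟩
        · have : c = x := (Subtype.mk_eq_mk.1 h1).symm
          have : G.Adj x d := this ▸ hcd
          rw [← Subtype.mk_eq_mk.1 h2] at this
          exact hnadj this
        · have hdx : d = x := (Subtype.mk_eq_mk.1 h1).symm
          have : G.Adj c x := hdx ▸ hcd
          rw [← Subtype.mk_eq_mk.1 h2] at this
          exact hnadj this.symm
      · subst hc
        obtain ⟨hdx, hnadj⟩ := hyfacts d hcd he2.2
        rw [hgy, hgne d hdy, hgne a ha, hgne b hby] at heq
        exfalso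
        rcases heq with ⟨h1, h2⟩ | ⟨h1, h2⟩
        · have hax : a = x := Subtype.mk_eq_mk.1 h1
          have : G.Adj x b := hax ▸ hab
          rw [Subtype.mk_eq_mk.1 h2] at this
          exact hnadj this
        · have hbx : b = x := Subtype.mk_eq_mk.1 h2
          have : G.Adj a x := hbx ▸ hab
          rw [Subtype.mk_eq_mk.1 h1] at this
          exact hnadj this.symm
      · rw [hgne a ha, hgne b hby, hgne c hc, hgne d hdy] at heq
        rcases heq with ⟨h1, h2⟩ | ⟨h1, h2⟩
        · rw [Subtype.mk_eq_mk.1 h1, Subtype.mk_eq_mk.1 h2]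
        · rw [Subtype.mk_eq_mk.1 h1, Subtype.mk_eq_mk.1 h2, Sym2.eq_swap]
  have hBcard : B.card ≤ (G.neighborFinset x ∩ G.neighborFinset y).card + 1 := by
    refine (Finset.card_insert_le _ _).trans ?_
    exact Nat.add_le_add_right (Finset.card_image_le) 1
  have hsd := Finset.card_le_card_sdiff_add_card (s := G.edgeFinset) (t := B)
  omega

end Part4
section Part5
open Finset
universe u

lemma lemL4 : ∀ (n : ℕ), ∀ (V : Type u) [Fintype V], ∀ (G : SimpleGraph V),
    Fintype.card V = n → 3 ≤ n → 2 * n ≤ G.edgeSet.ncard + 2 →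
    G.HasMinor (completeGraph (Fin 4)) := by
  intro n
  induction n using Nat.strong_induction_on with
  | _ n ih =>
    intro V _ G hcard hn3 he
    classical
    letI : DecidableRel G.Adj := Classical.decRel _
    rw [ncard_eq_edgeFinset_card] at he
    have hch := SimpleGraph.card_edgeFinset_le_card_choose_two (G := G)
    rw [hcard] at hch
    by_cases hn4 : n < 4
    · exfalso
      have h3 : n = 3 := by omega
      subst h3
      rw [show Nat.choose 3 2 = 3 from rfl] at hch
      omega
    · push_neg at hn4
      obtain ⟨G₀, hle, hE0⟩ := exists_trim G (2 * n - 2) (by omega)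
      letI : DecidableRel G₀.Adj := Classical.decRel _
      rw [ncard_eq_edgeFinset_card] at hE0
      refine hasMinor_mono _ hle ?_
      by_cases hdel : ∃ v, G₀.degree v ≤ 2
      · obtain ⟨v, hv⟩ := hdel
        letI : DecidableRel (G₀.comap (Subtype.val : {u : V // u ≠ v} → V)).Adj :=
          fun a b => ‹DecidableRel G₀.Adj› a.1 b.1
        have hcard1 : Fintype.card {u : V // u ≠ v} = n - 1 := by
          rw [card_compl_singleton, hcard]
        have hbound := del_edge_bound G₀ v
        have hminor := ih (n - 1) (by omega) {u : V // u ≠ v}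
          (G₀.comap (Subtype.val : {u : V // u ≠ v} → V)) hcard1 (by omega)
          (by rw [ncard_eq_edgeFinset_card]; omega)
        exact hasMinor_map _ G₀ _ Subtype.val Subtype.val_injective (fun a b h => h) hminor
      · push_neg at hdel
        by_cases hcon : ∃ x y, G₀.Adj x y ∧
            (G₀.neighborFinset x ∩ G₀.neighborFinset y).card ≤ 1
        · obtain ⟨x, y, hxy, hcom⟩ := hcon
          letI : DecidableRel (contractE G₀ x y).Adj := Classical.decRel _
          have hbound := contract_edge_bound G₀ x y hxy
          have hcard1 : Fintype.card {u : V // u ≠ y} = n - 1 := by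
            rw [card_compl_singleton, hcard]
          have hminor := ih (n - 1) (by omega) {u : V // u ≠ y} (contractE G₀ x y) hcard1
            (by omega) (by rw [ncard_eq_edgeFinset_card]; omega)
          exact contractE_hasMinor G₀ x y hxy _ hminor
        · push_neg at hcon
          obtain ⟨v, hv⟩ := exists_small_degree G₀ 4 (by rw [hcard]; omega)
          have hv3 : G₀.degree v = 3 := le_antisymm (by omega) (hdel v)
          letI : DecidableRel (G₀.induce (G₀.neighborSet v)).Adj :=
            fun a b => ‹DecidableRel G₀.Adj› a.1 b.1
          have hcards : Fintype.card (G₀.neighborSet v) = 3 := by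
            rw [SimpleGraph.card_neighborSet_eq_degree]; exact hv3
          have hdeg : ∀ u : (G₀.neighborSet v),
              Fintype.card (G₀.neighborSet v) - 1 ≤ (G₀.induce (G₀.neighborSet v)).degree u := by
            intro u
            have h1 : (G₀.neighborFinset u.1 ∩ G₀.neighborFinset v).card
                ≤ (G₀.induce (G₀.neighborSet v)).degree u :=
              common_le_induced_degree G₀ v u.1 u.2
            have h2 := hcon u.1 v ((u.2 : G₀.Adj v u.1).symm)
            rw [hcards]
            omega
          have hcomp := complete_of_degree_ge _ hdeg
          have e3 := Fintype.equivFinOfCardEq hcards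
          have hK3 : (G₀.induce (G₀.neighborSet v)).HasMinor (completeGraph (Fin 3)) :=
            clique_hasMinor _ 3 e3.symm e3.symm.injective
              (fun i j hij => hcomp _ _ (fun h => hij (e3.symm.injective h)))
          exact neighborSet_clique_lift G₀ v 3 hK3

lemma lemL5 : ∀ (n : ℕ), ∀ (V : Type u) [Fintype V], ∀ (G : SimpleGraph V),
    Fintype.card V = n → 4 ≤ n → 3 * n ≤ G.edgeSet.ncard + 5 →
    G.HasMinor (completeGraph (Fin 5)) := by
  intro n
  induction n using Nat.strong_induction_on with
  | _ n ih =>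
    intro V _ G hcard hn4 he
    classical
    letI : DecidableRel G.Adj := Classical.decRel _
    rw [ncard_eq_edgeFinset_card] at he
    have hch := SimpleGraph.card_edgeFinset_le_card_choose_two (G := G)
    rw [hcard] at hch
    by_cases hn5 : n < 5
    · exfalso
      have h4 : n = 4 := by omega
      subst h4
      rw [show Nat.choose 4 2 = 6 from rfl] at hch
      omega
    · push_neg at hn5
      obtain ⟨G₀, hle, hE0⟩ := exists_trim G (3 * n - 5) (by omega)
      letI : DecidableRel G₀.Adj := Classical.decRel _
      rw [ncard_eq_edgeFinset_card] at hE0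
      refine hasMinor_mono _ hle ?_
      by_cases hdel : ∃ v, G₀.degree v ≤ 3
      · obtain ⟨v, hv⟩ := hdel
        letI : DecidableRel (G₀.comap (Subtype.val : {u : V // u ≠ v} → V)).Adj :=
          fun a b => ‹DecidableRel G₀.Adj› a.1 b.1
        have hcard1 : Fintype.card {u : V // u ≠ v} = n - 1 := by
          rw [card_compl_singleton, hcard]
        have hbound := del_edge_bound G₀ v
        have hminor := ih (n - 1) (by omega) {u : V // u ≠ v}
          (G₀.comap (Subtype.val : {u : V // u ≠ v} → V)) hcard1 (by omega)
          (by rw [ncard_eq_edgeFinset_card]; omega)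
        exact hasMinor_map _ G₀ _ Subtype.val Subtype.val_injective (fun a b h => h) hminor
      · push_neg at hdel
        by_cases hcon : ∃ x y, G₀.Adj x y ∧
            (G₀.neighborFinset x ∩ G₀.neighborFinset y).card ≤ 2
        · obtain ⟨x, y, hxy, hcom⟩ := hcon
          letI : DecidableRel (contractE G₀ x y).Adj := Classical.decRel _
          have hbound := contract_edge_bound G₀ x y hxy
          have hcard1 : Fintype.card {u : V // u ≠ y} = n - 1 := by
            rw [card_compl_singleton, hcard]
          have hminor := ih (n - 1) (by omega) {u : V // u ≠ y} (contractE G₀ x y) hcard1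
            (by omega) (by rw [ncard_eq_edgeFinset_card]; omega)
          exact contractE_hasMinor G₀ x y hxy _ hminor
        · push_neg at hcon
          obtain ⟨v, hv⟩ := exists_small_degree G₀ 6 (by rw [hcard]; omega)
          have hv45 : G₀.degree v = 4 ∨ G₀.degree v = 5 := by
            have := hdel v
            omega
          letI : DecidableRel (G₀.induce (G₀.neighborSet v)).Adj :=
            fun a b => ‹DecidableRel G₀.Adj› a.1 b.1
          have hdeg3 : ∀ u : (G₀.neighborSet v),
              3 ≤ (G₀.induce (G₀.neighborSet v)).degree u := by
            intro u
            have h1 : (G₀.neighborFinset u.1 ∩ G₀.neighborFinset v).card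
                ≤ (G₀.induce (G₀.neighborSet v)).degree u :=
              common_le_induced_degree G₀ v u.1 u.2
            have h2 := hcon u.1 v ((u.2 : G₀.Adj v u.1).symm)
            omega
          rcases hv45 with hd | hd
          · -- degree 4 : neighborhood is a complete graph on 4 vertices
            have hcards : Fintype.card (G₀.neighborSet v) = 4 := by
              rw [SimpleGraph.card_neighborSet_eq_degree]; exact hd
            have hdeg : ∀ u : (G₀.neighborSet v),
                Fintype.card (G₀.neighborSet v) - 1
                  ≤ (G₀.induce (G₀.neighborSet v)).degree u := by
              intro u
              rw [hcards]
              exact hdeg3 u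
            have hcomp := complete_of_degree_ge _ hdeg
            have e4 := Fintype.equivFinOfCardEq hcards
            have hK4 : (G₀.induce (G₀.neighborSet v)).HasMinor (completeGraph (Fin 4)) :=
              clique_hasMinor _ 4 e4.symm e4.symm.injective
                (fun i j hij => hcomp _ _ (fun h => hij (e4.symm.injective h)))
            exact neighborSet_clique_lift G₀ v 4 hK4
          · -- degree 5 : neighborhood has ≥ 8 edges, apply the K4 lemma
            have hcards : Fintype.card (G₀.neighborSet v) = 5 := by
              rw [SimpleGraph.card_neighborSet_eq_degree]; exact hd
            have hEH := card_edge_ge_of_min_degree (G₀.induce (G₀.neighborSet v)) 3 hdeg3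
            rw [hcards] at hEH
            have hK4 : (G₀.induce (G₀.neighborSet v)).HasMinor (completeGraph (Fin 4)) := by
              refine lemL4 5 (G₀.neighborSet v) (G₀.induce (G₀.neighborSet v)) hcards
                (by omega) ?_
              rw [ncard_eq_edgeFinset_card]
              omega
            exact neighborSet_clique_lift G₀ v 4 hK4

end Part5

theorem mader_K5 {V : Type*} [Fintype V] (G : SimpleGraph V) (n : ℕ)
    (hn : n = Fintype.card V) (hn4 : 4 ≤ n)
    (hminor : ¬ G.HasMinor (completeGraph (Fin 5))) :
    G.edgeSet.ncard ≤ 3 * n - 6 := by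
  by_contra hcon
  push_neg at hcon
  exact hminor (lemL5 n V G hn.symm hn4 (by omega))
end
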